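/- An object X of a Grothendieck category is monoform if and only if X is uniform and for every nonzero subobject H of X, the only object isomorphic to both a subobject of H and a subobject of X/H is the zero object. -/

import Mathlib

open CategoryTheory Category Limits

universe v u

/-- A Grothendieck category: an abelian category with (small) colimits, exact filtered
colimits (AB5) and a separator. -/
class GrothendieckCategory (C : Type u) [Category.{v} C] [Abelian C] : Prop where
  hasColimits : Limits.HasColimits C
  hasFilteredColimits : Limits.HasFilteredColimits C
  ab5 : @AB5 C _ hasFilteredColimits
  hasSeparator : HasSeparator C

/-- An object `X` is monoform if for every subobject `H` of `X`, every nonzero morphism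
`H ⟶ X` is a monomorphism. -/
def Monoform {C : Type u} [Category.{v} C] [Abelian C] (X : C) : Prop :=
  ∀ ⦃H : C⦄ (i : H ⟶ X), Mono i → ∀ f : H ⟶ X, f ≠ 0 → Mono f

/-- An object `X` is uniform if any two nonzero subobjects of `X` have nonzero
intersection. -/
def Uniform {C : Type u} [Category.{v} C] [Abelian C] (X : C) : Prop :=
  ∀ A B : Subobject X, A ≠ ⊥ → B ≠ ⊥ → A ⊓ B ≠ ⊥

section Aux

open CategoryTheory.Abelian

variable {C : Type u} [Category.{v} C] [Abelian C]

/-- A monomorphism out of a nonzero object is nonzero. -/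
lemma aux_mono_ne_zero {A B : C} (g : A ⟶ B) [Mono g] (h : ¬ IsZero A) : g ≠ 0 := by
  intro hg
  apply h
  rw [IsZero.iff_id_eq_zero]
  apply (cancel_mono g).1
  simp [hg]

lemma aux_isZero_of_mono_eq_zero {A B : C} (g : A ⟶ B) [Mono g] (h : g = 0) : IsZero A := by
  by_contra hA
  exact aux_mono_ne_zero g hA h

/-- A subobject is ⊥ iff its arrow vanishes. -/
lemma aux_subobject_eq_bot_iff {X : C} (A : Subobject X) : A = ⊥ ↔ A.arrow = 0 := by
  conv_lhs => rw [← Subobject.mk_arrow A]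
  exact Subobject.mk_eq_bot_iff_zero

open CategoryTheory.Abelian.Pseudoelement in
/-- The canonical monomorphism from the image of `f : H ⟶ X` (where `H` is embedded in `X`
via a mono `i`) to the cokernel of `ker f ⟶ X`. -/
lemma aux_image_mono_cokernel {H X : C} (i : H ⟶ X) [Mono i] (f : H ⟶ X) :
    ∃ u : Abelian.image f ⟶ cokernel (kernel.ι f ≫ i), Mono u := by
  have hw : kernel.ι (Abelian.factorThruImage f) ≫ i ≫ cokernel.π (kernel.ι f ≫ i) = 0 := by
    have h1 : kernel.ι (Abelian.factorThruImage f) ≫ f = 0 := by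
      have h0 : kernel.ι (Abelian.factorThruImage f) ≫
          Abelian.factorThruImage f ≫ Abelian.image.ι f = 0 := by
        rw [kernel.condition_assoc, zero_comp]
      rwa [Abelian.image.fac] at h0
    have h2 : kernel.lift f (kernel.ι (Abelian.factorThruImage f)) h1 ≫ kernel.ι f =
        kernel.ι (Abelian.factorThruImage f) := kernel.lift_ι _ _ _
    rw [← h2, Category.assoc, ← Category.assoc (kernel.ι f), cokernel.condition, comp_zero]
  refine ⟨Abelian.epiDesc (Abelian.factorThruImage f) _ hw, ?_⟩
  have hfac : Abelian.factorThruImage f ≫ Abelian.epiDesc (Abelian.factorThruImage f) _ hw =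
      i ≫ cokernel.π (kernel.ι f ≫ i) := comp_epiDesc _ _ _
  -- use pseudoelements
  apply mono_of_zero_of_map_zero
  intro a ha
  obtain ⟨b, rfl⟩ := pseudo_surjective_of_epi (Abelian.factorThruImage f) a
  rw [← Pseudoelement.comp_apply, hfac, Pseudoelement.comp_apply] at ha
  -- exactness of (kernel.ι f ≫ i, cokernel.π (kernel.ι f ≫ i)) on pseudoelements
  obtain ⟨c, hc⟩ := pseudo_exact_of_exact (ShortComplex.exact_cokernel (kernel.ι f ≫ i)) _ ha
  have hcb : pseudoApply (kernel.ι f) c = b := by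
    apply pseudo_injective_of_mono i
    rw [← Pseudoelement.comp_apply]
    exact hc
  have hke : kernel.ι f ≫ Abelian.factorThruImage f = 0 := by
    apply (cancel_mono (Abelian.image.ι f)).1
    rw [Category.assoc, Abelian.image.fac, kernel.condition, zero_comp]
  rw [← hcb, ← Pseudoelement.comp_apply, hke, Pseudoelement.zero_apply]

end Aux

/-- An object `X` of a Grothendieck category is monoform if and only if `X` is uniform and
for every nonzero subobject `H ⊆ X`, the only object isomorphic both to a subobject of `H`
and to a subobject of `X/H` is the zero object. -/
theorem monoform_iff_uniform_and_no_common_subobject {C : Type u} [Category.{v} C]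
    [Abelian C] [GrothendieckCategory C] (X : C) :
    Monoform X ↔
      (Uniform X ∧
        ∀ (H : C) (i : H ⟶ X), Mono i → ¬ IsZero H →
          ∀ Y : C, (∃ j : Y ⟶ H, Mono j) → (∃ k : Y ⟶ cokernel i, Mono k) → IsZero Y) := by
  constructor
  · intro hm
    constructor
    · -- monoform → uniform
      intro A B hA hB hAB
      have hAa : A.arrow ≠ 0 := fun h => hA ((aux_subobject_eq_bot_iff A).2 h)
      have hBa : B.arrow ≠ 0 := fun h => hB ((aux_subobject_eq_bot_iff B).2 h)
      set i : ((A : C) ⊞ (B : C)) ⟶ X := biprod.desc A.arrow B.arrow with hi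
      have hisum : ∀ {T : C} (g : T ⟶ (A : C) ⊞ (B : C)),
          g ≫ i = g ≫ biprod.fst ≫ A.arrow + g ≫ biprod.snd ≫ B.arrow := by
        intro T g
        have : i = biprod.fst ≫ A.arrow + biprod.snd ≫ B.arrow := by
          apply biprod.hom_ext' <;> simp [hi]
        rw [this]
        simp [Preadditive.comp_add]
      have monoi : Mono i := by
        apply Preadditive.mono_of_cancel_zero
        intro T g hg
        rw [hisum g] at hg
        have h1 : (g ≫ biprod.fst) ≫ A.arrow = (-(g ≫ biprod.snd)) ≫ B.arrow := by
          rw [Preadditive.neg_comp, eq_neg_iff_add_eq_zero]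
          simpa [Category.assoc] using hg
        have hFA : A.Factors ((g ≫ biprod.fst) ≫ A.arrow) :=
          Subobject.factors_comp_arrow _
        have hFB : B.Factors ((g ≫ biprod.fst) ≫ A.arrow) := by
          rw [h1]; exact Subobject.factors_comp_arrow _
        have hinf : (A ⊓ B).Factors ((g ≫ biprod.fst) ≫ A.arrow) :=
          (Subobject.inf_factors _).2 ⟨hFA, hFB⟩
        rw [hAB, Subobject.bot_factors_iff_zero] at hinf
        have hga : g ≫ biprod.fst = 0 := zero_of_comp_mono A.arrow hinf
        have hgb : g ≫ biprod.snd = 0 := by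
          have h2 : (g ≫ biprod.snd) ≫ B.arrow = 0 := by
            have := h1.symm
            rw [hinf, Preadditive.neg_comp, neg_eq_zero] at this
            exact this
          exact zero_of_comp_mono B.arrow h2
        ext
        · rw [hga, zero_comp, zero_comp]
          rw [zero_comp]
        · rw [hgb, zero_comp, zero_comp]
          rw [zero_comp]
      set g : ((A : C) ⊞ (B : C)) ⟶ X := biprod.fst ≫ A.arrow with hgdef
      have hg0 : g ≠ 0 := by
        intro h
        apply hAa
        have : biprod.inl ≫ g = A.arrow := by simp [hgdef]
        rw [h, comp_zero] at this
        exact this.symm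
      have monog : Mono g := hm i monoi g hg0
      have hinr : (biprod.inr : (B : C) ⟶ (A : C) ⊞ (B : C)) ≫ g = 0 := by simp [hgdef]
      have : (biprod.inr : (B : C) ⟶ (A : C) ⊞ (B : C)) = 0 := by
        apply (cancel_mono g).1
        rw [hinr, zero_comp]
      apply hBa
      have : (biprod.inr : (B : C) ⟶ (A : C) ⊞ (B : C)) ≫ i = B.arrow := by simp [hi]
      rw [‹(biprod.inr : (B : C) ⟶ (A : C) ⊞ (B : C)) = 0›, zero_comp] at this
      exact this.symm
    · -- monoform → no common subobject
      rintro H i hi hH Y ⟨j, hj⟩ ⟨k, hk⟩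
      by_contra hY
      have hji : Mono (j ≫ i) := mono_comp _ _
      have hjine : j ≫ i ≠ 0 := aux_mono_ne_zero _ hY
      set p₁ := pullback.fst k (cokernel.π i) with hp₁
      set p₂ := pullback.snd k (cokernel.π i) with hp₂
      have monop₂ : Mono p₂ := inferInstance
      have epip₁ : Epi p₁ := inferInstance
      set g : pullback k (cokernel.π i) ⟶ X := p₁ ≫ j ≫ i with hgdef
      have hg0 : g ≠ 0 := by
        intro h
        apply hjine
        apply (cancel_epi p₁).1
        rw [← hgdef, h, comp_zero]
      have monog : Mono g := hm p₂ monop₂ g hg0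
      have hli : i ≫ cokernel.π i = (0 : H ⟶ Y) ≫ k := by simp
      set l : H ⟶ pullback k (cokernel.π i) := pullback.lift 0 i hli.symm with hl
      have hl₁ : l ≫ p₁ = 0 := pullback.lift_fst _ _ _
      have hl₂ : l ≫ p₂ = i := pullback.lift_snd _ _ _
      have hlg : l ≫ g = 0 := by rw [hgdef, ← Category.assoc, hl₁, zero_comp]
      have hl0 : l = 0 := by
        apply (cancel_mono g).1
        rw [hlg, zero_comp]
      apply hH
      apply aux_isZero_of_mono_eq_zero i
      rw [← hl₂, hl0, zero_comp]
  · rintro ⟨hu, hc⟩ H i hi f hf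
    apply Abelian.mono_of_kernel_ι_eq_zero
    by_contra hK
    have hK' : ¬ IsZero (kernel f) := by
      intro h
      exact hK (h.eq_zero_of_src _)
    set i' : kernel f ⟶ X := kernel.ι f ≫ i with hi'
    have monoi' : Mono i' := mono_comp _ _
    have hi'ne : i' ≠ 0 := by
      intro h
      apply hK
      apply (cancel_mono i).1
      rw [← hi', h, zero_comp]
    set A : Subobject X := Subobject.mk i' with hA
    set B : Subobject X := Subobject.mk (Abelian.image.ι f) with hB
    have hAbot : A ≠ ⊥ := fun h => hi'ne (Subobject.mk_eq_bot_iff_zero.1 h)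
    have hBbot : B ≠ ⊥ := by
      intro h
      apply hf
      rw [← Abelian.image.fac f, Subobject.mk_eq_bot_iff_zero.1 h, comp_zero]
    have hAB := hu A B hAbot hBbot
    obtain ⟨u, hmu⟩ := aux_image_mono_cokernel i f
    set Y : C := ((A ⊓ B : Subobject X) : C) with hY
    set jY : Y ⟶ kernel f :=
      Subobject.ofLE _ _ (inf_le_left (a := A) (b := B)) ≫ (Subobject.underlyingIso i').hom
      with hjY
    have monojY : Mono jY := mono_comp _ _
    set kY : Y ⟶ cokernel i' :=
      Subobject.ofLE _ _ (inf_le_right (a := A) (b := B)) ≫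
        (Subobject.underlyingIso (Abelian.image.ι f)).hom ≫ u with hkY
    have monokY : Mono kY := mono_comp _ _
    have hz : IsZero Y := hc (kernel f) i' monoi' hK' Y ⟨jY, monojY⟩ ⟨kY, monokY⟩
    apply hAB
    apply (aux_subobject_eq_bot_iff _).2
    exact hz.eq_zero_of_src _
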